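/- arXiv:1405.4550 — 2 statements merged into one kernel-verified Lean document; each statement's English description precedes it below -/
import Mathlib

section
/- Let Ω ⊆ ℝⁿ be an open connected set and let E ⊆ Ω be a Lebesgue measurable set with 0 < |E| and |Ω \ E| > 0 (where |·| denotes Lebesgue measure). Then there exists a continuously differentiable vector field Y : ℝⁿ → ℝⁿ with compact support contained in Ω such that ∫_E div Y(x) dx = 1. -/
open MeasureTheory Metric Set Filter
open scoped ENNReal Topology

/-- The divergence of a vector field: the trace of its derivative. -/
noncomputable def divergence {n : ℕ}
    (Y : EuclideanSpace ℝ (Fin n) → EuclideanSpace ℝ (Fin n))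
    (x : EuclideanSpace ℝ (Fin n)) : ℝ :=
  LinearMap.trace ℝ (EuclideanSpace ℝ (Fin n)) (fderiv ℝ Y x)

variable {n : ℕ}

lemma trace_smulRight_clm (ℓ : EuclideanSpace ℝ (Fin n) →L[ℝ] ℝ) (u : EuclideanSpace ℝ (Fin n)) :
    LinearMap.trace ℝ (EuclideanSpace ℝ (Fin n))
      ((ContinuousLinearMap.smulRight ℓ u : EuclideanSpace ℝ (Fin n) →L[ℝ] EuclideanSpace ℝ (Fin n)) :
        EuclideanSpace ℝ (Fin n) →ₗ[ℝ] EuclideanSpace ℝ (Fin n)) = ℓ u := by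
  have h : ((ContinuousLinearMap.smulRight ℓ u : EuclideanSpace ℝ (Fin n) →L[ℝ] EuclideanSpace ℝ (Fin n)) :
        EuclideanSpace ℝ (Fin n) →ₗ[ℝ] EuclideanSpace ℝ (Fin n))
      = dualTensorHom ℝ (EuclideanSpace ℝ (Fin n)) (EuclideanSpace ℝ (Fin n))
          ((ℓ : EuclideanSpace ℝ (Fin n) →ₗ[ℝ] ℝ) ⊗ₜ u) := by
    ext v
    simp [dualTensorHom_apply]
  rw [h, LinearMap.trace_eq_contract_apply, contractLeft_apply]
  rfl

lemma divergence_smul_const {g : EuclideanSpace ℝ (Fin n) → ℝ}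
    {ℓ : EuclideanSpace ℝ (Fin n) →L[ℝ] ℝ} {u x : EuclideanSpace ℝ (Fin n)}
    (h : HasFDerivAt g ℓ x) :
    divergence (fun y => g y • u) x = ℓ u := by
  rw [divergence, (h.smul_const u).fderiv, trace_smulRight_clm]

lemma divergence_add {Y Z : EuclideanSpace ℝ (Fin n) → EuclideanSpace ℝ (Fin n)}
    (hY : Differentiable ℝ Y) (hZ : Differentiable ℝ Z) (x : EuclideanSpace ℝ (Fin n)) :
    divergence (fun y => Y y + Z y) x = divergence Y x + divergence Z x := by
  rw [divergence, fderiv_fun_add (hY x) (hZ x)]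
  simp [divergence]

lemma divergence_const_smul {Y : EuclideanSpace ℝ (Fin n) → EuclideanSpace ℝ (Fin n)}
    (hY : Differentiable ℝ Y) (c : ℝ) (x : EuclideanSpace ℝ (Fin n)) :
    divergence (fun y => c • Y y) x = c * divergence Y x := by
  rw [divergence, fderiv_fun_const_smul (hY x)]
  simp [divergence]

lemma divergence_zero (x : EuclideanSpace ℝ (Fin n)) :
    divergence (fun _ => (0 : EuclideanSpace ℝ (Fin n))) x = 0 := by
  rw [divergence, fderiv_fun_const]
  simp

lemma exists_link (ρ : EuclideanSpace ℝ (Fin n) → ℝ) (hρ : ContDiff ℝ (⊤ : ℕ∞) ρ)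
    (hρs : HasCompactSupport ρ) {ε : ℝ}
    (hsupp : Function.support ρ ⊆ ball 0 ε)
    (a b : EuclideanSpace ℝ (Fin n)) :
    ∃ Y : EuclideanSpace ℝ (Fin n) → EuclideanSpace ℝ (Fin n),
      ContDiff ℝ 1 Y ∧ HasCompactSupport Y ∧
      tsupport Y ⊆ cthickening ε (segment ℝ a b) ∧
      ∀ x, divergence Y x = ρ (x - a) - ρ (x - b) := by
  classical
  set u := b - a with hu
  set μ : Measure ℝ := volume.restrict (Set.Ioc (0:ℝ) 1) with hμ
  have hle : (1 : WithTop ℕ∞) ≤ ((⊤ : ℕ∞) : WithTop ℕ∞) := by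
    exact_mod_cast (le_top : (1:ℕ∞) ≤ ⊤)
  have hρd : Differentiable ℝ ρ := hρ.differentiable (by simp)
  set ρ' := fderiv ℝ ρ with hρ'def
  have hρ'c : Continuous ρ' := hρ.continuous_fderiv (by simp)
  obtain ⟨C, hC⟩ : ∃ C, ∀ z, ‖ρ' z‖ ≤ C :=
    (hρs.fderiv (𝕜 := ℝ)).exists_bound_of_continuous hρ'c
  have cγ : ∀ t : ℝ, Continuous fun x : EuclideanSpace ℝ (Fin n) => x - a - t • u := by
    intro t; fun_prop
  have cγ' : ∀ x : EuclideanSpace ℝ (Fin n), Continuous fun t : ℝ => x - a - t • u := by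
    intro x; fun_prop
  have contF : ∀ x, Continuous (fun t : ℝ => ρ (x - a - t • u)) :=
    fun x => hρ.continuous.comp (cγ' x)
  have contF' : ∀ x, Continuous (fun t : ℝ => ρ' (x - a - t • u)) :=
    fun x => hρ'c.comp (cγ' x)
  have intF : ∀ x, Integrable (fun t : ℝ => ρ (x - a - t • u)) μ :=
    fun x => (contF x).integrableOn_Ioc
  have intF' : ∀ x, Integrable (fun t : ℝ => ρ' (x - a - t • u)) μ :=
    fun x => (contF' x).integrableOn_Ioc
  have hder : ∀ (t : ℝ) (x : EuclideanSpace ℝ (Fin n)),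
      HasFDerivAt (fun y => ρ (y - a - t • u)) (ρ' (x - a - t • u)) x := by
    intro t x
    have hinner : HasFDerivAt (fun y : EuclideanSpace ℝ (Fin n) => y - a - t • u)
        (ContinuousLinearMap.id ℝ (EuclideanSpace ℝ (Fin n))) x :=
      ((hasFDerivAt_id x).sub_const a).sub_const (t • u)
    have h := (hρd _).hasFDerivAt.comp x hinner
    simpa [Function.comp_def, hρ'def] using h
  have hgG : ∀ x₀ : EuclideanSpace ℝ (Fin n),
      HasFDerivAt (fun x => ∫ t, ρ (x - a - t • u) ∂μ)
        (∫ t, ρ' (x₀ - a - t • u) ∂μ) x₀ := by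
    intro x₀
    exact hasFDerivAt_integral_of_dominated_of_fderiv_le (F' := fun x t => ρ' (x - a - t • u)) (bound := fun _ => C) (ball_mem_nhds x₀ one_pos)
      (Eventually.of_forall fun x => (contF x).aestronglyMeasurable)
      (intF x₀)
      ((contF' x₀).aestronglyMeasurable)
      (Eventually.of_forall fun t x _ => hC _)
      (integrableOn_const measure_Ioc_lt_top.ne)
      (Eventually.of_forall fun t x _ => hder t x)
  have contG : Continuous (fun x => ∫ t, ρ' (x - a - t • u) ∂μ) :=
    continuous_of_dominated (fun x => (contF' x).aestronglyMeasurable)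
      (fun x => Eventually.of_forall fun t => hC _)
      (integrableOn_const measure_Ioc_lt_top.ne)
      (Eventually.of_forall fun t => hρ'c.comp (cγ t))
  have hgC1 : ContDiff ℝ 1 (fun x => ∫ t, ρ (x - a - t • u) ∂μ) := by
    rw [contDiff_one_iff_fderiv]
    refine ⟨fun x => (hgG x).differentiableAt, ?_⟩
    have hfd : fderiv ℝ (fun x => ∫ t, ρ (x - a - t • u) ∂μ)
        = fun x => ∫ t, ρ' (x - a - t • u) ∂μ := funext fun x => (hgG x).fderiv
    rw [hfd]; exact contG
  have hseg : IsCompact (segment ℝ a b) := by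
    rw [segment_eq_image']; exact isCompact_Icc.image (by fun_prop)
  have hgzero : ∀ x ∉ cthickening ε (segment ℝ a b),
      (∫ t, ρ (x - a - t • u) ∂μ) = 0 := by
    intro x hxc
    rw [hμ]
    apply setIntegral_eq_zero_of_forall_eq_zero
    intro t ht
    by_contra hne
    have h1 : ‖x - a - t • u‖ < ε := mem_ball_zero_iff.1 (hsupp (Function.mem_support.2 hne))
    have hmem : a + t • u ∈ segment ℝ a b := by
      rw [segment_eq_image']
      exact ⟨t, ⟨ht.1.le, ht.2⟩, rfl⟩
    have hd : dist x (a + t • u) ≤ ε := by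
      rw [dist_eq_norm]
      have : x - (a + t • u) = x - a - t • u := by abel
      rw [this]
      exact h1.le
    exact hxc (mem_cthickening_of_dist_le x _ ε _ hmem hd)
  have hts : tsupport (fun x => (∫ t, ρ (x - a - t • u) ∂μ) • u)
      ⊆ cthickening ε (segment ℝ a b) := by
    apply closure_minimal _ isClosed_cthickening
    intro x hx
    by_contra hxc
    exact Function.mem_support.1 hx (by rw [hgzero x hxc, zero_smul])
  refine ⟨fun x => (∫ t, ρ (x - a - t • u) ∂μ) • u,
    hgC1.smul contDiff_const,
    IsCompact.of_isClosed_subset hseg.cthickening (isClosed_tsupport _) hts,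
    hts, ?_⟩
  intro x
  have h1 : divergence (fun y => (∫ t, ρ (y - a - t • u) ∂μ) • u) x
      = (∫ t, ρ' (x - a - t • u) ∂μ) u := divergence_smul_const (hgG x)
  rw [h1, ContinuousLinearMap.integral_apply (intF' x)]
  have key : ∀ t ∈ uIcc (0:ℝ) 1,
      HasDerivAt (fun s : ℝ => ρ (x - a - s • u)) (-(ρ' (x - a - t • u) u)) t := by
    intro t _
    have h4 : HasDerivAt (fun s : ℝ => s • u) u t := by
      simpa using (hasDerivAt_id t).smul_const u
    have hγ : HasDerivAt (fun s : ℝ => x - a - s • u) (-u) t := h4.const_sub (x - a)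
    have h5 := (hρd _).hasFDerivAt.comp_hasDerivAt t hγ
    simpa [Function.comp_def, hρ'def] using h5
  have hcont : Continuous fun t : ℝ => -(ρ' (x - a - t • u) u) := by
    exact (((ContinuousLinearMap.apply ℝ ℝ u).continuous).comp (contF' x)).neg
  have hftc := intervalIntegral.integral_eq_sub_of_hasDerivAt key (hcont.intervalIntegrable 0 1)
  have h6 : ∫ t, ρ' (x - a - t • u) u ∂μ = ∫ t in (0:ℝ)..1, ρ' (x - a - t • u) u := by
    rw [intervalIntegral.integral_of_le zero_le_one, hμ]
  rw [h6]
  have h7 : ∫ t in (0:ℝ)..1, ρ' (x - a - t • u) u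
      = -∫ t in (0:ℝ)..1, -(ρ' (x - a - t • u) u) := by
    rw [intervalIntegral.integral_neg, neg_neg]
  rw [h7, hftc]
  have e0 : x - a - (0:ℝ) • u = x - a := by rw [zero_smul, sub_zero]
  have e1 : x - a - (1:ℝ) • u = x - b := by rw [one_smul, hu]; abel
  rw [e0, e1]
  ring

/-- Polygonal connectivity in an open connected set. -/
lemma reflTransGen_segment {Ω : Set (EuclideanSpace ℝ (Fin n))} (hΩo : IsOpen Ω)
    (hΩc : IsPreconnected Ω) {a b : EuclideanSpace ℝ (Fin n)} (ha : a ∈ Ω) (hb : b ∈ Ω) :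
    Relation.ReflTransGen (fun p q => segment ℝ p q ⊆ Ω) a b := by
  set R : EuclideanSpace ℝ (Fin n) → EuclideanSpace ℝ (Fin n) → Prop :=
    fun p q => segment ℝ p q ⊆ Ω with hR
  by_contra hnb
  set U : Set (EuclideanSpace ℝ (Fin n)) := {x | x ∈ Ω ∧ Relation.ReflTransGen R a x} with hU
  set W : Set (EuclideanSpace ℝ (Fin n)) := {x | x ∈ Ω ∧ ¬ Relation.ReflTransGen R a x} with hW
  have hball : ∀ x ∈ Ω, ∃ r > 0, ∀ y ∈ ball x r, R x y ∧ R y x := by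
    intro x hx
    obtain ⟨r, hr, hsub⟩ := Metric.isOpen_iff.1 hΩo x hx
    refine ⟨r, hr, fun y hy => ?_⟩
    constructor
    · exact fun z hz => hsub ((convex_ball x r).segment_subset (mem_ball_self hr) hy hz)
    · exact fun z hz => hsub ((convex_ball x r).segment_subset hy (mem_ball_self hr) hz)
  have hUo : IsOpen U := by
    rw [Metric.isOpen_iff]
    rintro x ⟨hxΩ, hxR⟩
    obtain ⟨r, hr, h⟩ := hball x hxΩ
    obtain ⟨r', hr', hsub⟩ := Metric.isOpen_iff.1 hΩo x hxΩ
    refine ⟨min r r', lt_min hr hr', fun y hy => ?_⟩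
    have hy1 : y ∈ ball x r := ball_subset_ball (min_le_left _ _) hy
    have hy2 : y ∈ Ω := hsub (ball_subset_ball (min_le_right _ _) hy)
    exact ⟨hy2, hxR.tail (h y hy1).1⟩
  have hWo : IsOpen W := by
    rw [Metric.isOpen_iff]
    rintro x ⟨hxΩ, hxR⟩
    obtain ⟨r, hr, h⟩ := hball x hxΩ
    obtain ⟨r', hr', hsub⟩ := Metric.isOpen_iff.1 hΩo x hxΩ
    refine ⟨min r r', lt_min hr hr', fun y hy => ?_⟩
    have hy1 : y ∈ ball x r := ball_subset_ball (min_le_left _ _) hy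
    have hy2 : y ∈ Ω := hsub (ball_subset_ball (min_le_right _ _) hy)
    refine ⟨hy2, fun hy3 => hxR (hy3.tail (h y hy1).2)⟩
  have hcover : Ω ⊆ U ∪ W := by
    intro x hx
    by_cases hxa : Relation.ReflTransGen R a x
    · exact Or.inl ⟨hx, hxa⟩
    · exact Or.inr ⟨hx, hxa⟩
  have hne1 : (Ω ∩ U).Nonempty := ⟨a, ha, ha, Relation.ReflTransGen.refl⟩
  have hne2 : (Ω ∩ W).Nonempty := ⟨b, hb, hb, hnb⟩
  obtain ⟨z, _, ⟨_, hz1⟩, ⟨_, hz2⟩⟩ := hΩc U W hUo hWo hcover hne1 hne2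
  exact hz2 hz1

/-- Chain: compact "core" plus a field for every sufficiently small bump. -/
lemma exists_chain {Ω : Set (EuclideanSpace ℝ (Fin n))}
    {a b : EuclideanSpace ℝ (Fin n)}
    (hab : Relation.ReflTransGen (fun p q => segment ℝ p q ⊆ Ω) a b) :
    ∃ K : Set (EuclideanSpace ℝ (Fin n)), IsCompact K ∧ K ⊆ Ω ∧
      ∀ ε : ℝ, cthickening ε K ⊆ Ω →
        ∀ ρ : EuclideanSpace ℝ (Fin n) → ℝ, ContDiff ℝ (⊤ : ℕ∞) ρ → HasCompactSupport ρ →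
          Function.support ρ ⊆ ball 0 ε →
          ∃ Y : EuclideanSpace ℝ (Fin n) → EuclideanSpace ℝ (Fin n),
            ContDiff ℝ 1 Y ∧ HasCompactSupport Y ∧ tsupport Y ⊆ Ω ∧
            ∀ x, divergence Y x = ρ (x - a) - ρ (x - b) := by
  induction hab with
  | refl =>
      refine ⟨∅, isCompact_empty, empty_subset _, fun ε hεK ρ hρ hρs hsupp => ?_⟩
      refine ⟨fun _ => 0, contDiff_const, ?_, ?_, fun x => ?_⟩
      · rw [HasCompactSupport]
        convert isCompact_empty
        simp [tsupport, Function.support]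
      · have : tsupport (fun _ : EuclideanSpace ℝ (Fin n) =>
            (0 : EuclideanSpace ℝ (Fin n))) = ∅ := by
          simp [tsupport, Function.support]
        rw [this]; exact empty_subset _
      · rw [divergence_zero, sub_self]
  | @tail b c hab hbc ih =>
      obtain ⟨K, hKc, hKΩ, hK⟩ := ih
      refine ⟨K ∪ segment ℝ b c, hKc.union (by
          rw [segment_eq_image']; exact isCompact_Icc.image (by fun_prop)),
        union_subset hKΩ hbc, fun ε hεK ρ hρ hρs hsupp => ?_⟩
      rw [cthickening_union] at hεK
      obtain ⟨Y₁, hY₁c, hY₁s, hY₁t, hY₁d⟩ :=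
        hK ε (subset_trans subset_union_left hεK) ρ hρ hρs hsupp
      obtain ⟨Y₂, hY₂c, hY₂s, hY₂t, hY₂d⟩ := exists_link ρ hρ hρs hsupp b c
      refine ⟨fun x => Y₁ x + Y₂ x, hY₁c.add hY₂c, ?_, ?_, fun x => ?_⟩
      · exact HasCompactSupport.add hY₁s hY₂s
      · have hsub : tsupport (fun x => Y₁ x + Y₂ x) ⊆ tsupport Y₁ ∪ tsupport Y₂ := by
          apply closure_minimal _ ((isClosed_tsupport _).union (isClosed_tsupport _))
          intro x hx
          by_contra hxc
          rw [mem_union] at hxc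
          push_neg at hxc
          exact Function.mem_support.1 hx (by
            rw [image_eq_zero_of_notMem_tsupport hxc.1,
              image_eq_zero_of_notMem_tsupport hxc.2, add_zero])
        exact hsub.trans (union_subset hY₁t
          (hY₂t.trans (subset_trans subset_union_right hεK)))
      · rw [divergence_add (hY₁c.differentiable one_ne_zero) (hY₂c.differentiable one_ne_zero),
          hY₁d, hY₂d]
        ring

lemma exists_density_point {S : Set (EuclideanSpace ℝ (Fin n))} (hS : MeasurableSet S)
    (hSpos : 0 < volume S) {θ : ℝ} (hθ : 0 < θ) :
    ∃ x ∈ S, ∀ᶠ ε in 𝓝[>] (0:ℝ),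
      (volume (closedBall x ε \ S)).toReal ≤ θ * (volume (closedBall x ε)).toReal := by
  have hne : (volume.restrict S) ≠ 0 := fun h => hSpos.ne' (by
    rwa [Measure.restrict_eq_zero] at h)
  haveI : (ae (volume.restrict S)).NeBot := ae_neBot.2 hne
  have h := Besicovitch.ae_tendsto_measure_inter_div volume S
  obtain ⟨x, hmem, hx⟩ := ((ae_restrict_mem hS).and h).exists
  refine ⟨x, hmem, ?_⟩
  have hreal : Tendsto (fun r =>
      (volume (S ∩ closedBall x r)).toReal / (volume (closedBall x r)).toReal)
      (𝓝[>] (0:ℝ)) (𝓝 1) := by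
    have h2 := (ENNReal.tendsto_toReal (by norm_num : (1:ℝ≥0∞) ≠ ⊤)).comp hx
    simpa [Function.comp_def, ENNReal.toReal_div] using h2
  filter_upwards [hreal.eventually (eventually_gt_nhds (by linarith : 1 - θ < 1)),
    self_mem_nhdsWithin] with ε hratio hεpos
  have hεpos' : (0:ℝ) < ε := hεpos
  have hfin : volume (closedBall x ε) ≠ ⊤ := measure_closedBall_lt_top.ne
  have hfin1 : volume (closedBall x ε ∩ S) ≠ ⊤ :=
    ((measure_mono inter_subset_left).trans_lt measure_closedBall_lt_top).ne
  have hfin2 : volume (closedBall x ε \ S) ≠ ⊤ :=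
    ((measure_mono diff_subset).trans_lt measure_closedBall_lt_top).ne
  have hsum : volume (closedBall x ε ∩ S) + volume (closedBall x ε \ S)
      = volume (closedBall x ε) := measure_inter_add_diff _ hS
  have hsum' : (volume (closedBall x ε ∩ S)).toReal + (volume (closedBall x ε \ S)).toReal
      = (volume (closedBall x ε)).toReal := by
    rw [← ENNReal.toReal_add hfin1 hfin2, hsum]
  have hBpos : 0 < (volume (closedBall x ε)).toReal :=
    ENNReal.toReal_pos (measure_closedBall_pos volume x hεpos').ne' hfin
  rw [inter_comm] at hratio
  have hlow := (lt_div_iff₀ hBpos).1 hratio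
  linarith

/-- Lemma 3.2: given an open connected `Ω ⊆ ℝⁿ` and a measurable `E ⊆ Ω` with
`0 < |E|` and `|Ω \ E| > 0`, there exists a `C¹` vector field `Y` with compact
support contained in `Ω` such that `∫_E div Y = 1`. -/
theorem stmt0 {n : ℕ} (Ω E : Set (EuclideanSpace ℝ (Fin n)))
    (hΩo : IsOpen Ω) (hΩc : IsConnected Ω)
    (hEm : MeasurableSet E) (hEΩ : E ⊆ Ω)
    (h1 : 0 < volume E) (h2 : 0 < volume (Ω \ E)) :
    ∃ Y : EuclideanSpace ℝ (Fin n) → EuclideanSpace ℝ (Fin n),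
      ContDiff ℝ 1 Y ∧ HasCompactSupport Y ∧ tsupport Y ⊆ Ω ∧
      ∫ x in E, divergence Y x = 1 := by
  classical
  rcases Nat.eq_zero_or_pos n with hn | hn
  · exfalso
    subst hn
    haveI : Subsingleton (EuclideanSpace ℝ (Fin 0)) :=
      ⟨fun x y => by ext i; exact Fin.elim0 i⟩
    obtain ⟨x, hx⟩ := nonempty_of_measure_ne_zero h1.ne'
    obtain ⟨y, hy⟩ := nonempty_of_measure_ne_zero h2.ne'
    exact hy.2 (by rwa [Subsingleton.elim y x])
  -- density points
  set θ : ℝ := ((4:ℝ) * 2 ^ n)⁻¹ with hθdef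
  have hθ : 0 < θ := by positivity
  obtain ⟨a, haE, hevA⟩ := exists_density_point hEm h1 hθ
  obtain ⟨b, hbΩE, hevB⟩ := exists_density_point (hΩo.measurableSet.diff hEm) h2 hθ
  -- chain
  obtain ⟨K, hKc, hKΩ, hK⟩ :=
    exists_chain (reflTransGen_segment hΩo hΩc.isPreconnected (hEΩ haE) hbΩE.1)
  obtain ⟨ε₀, hε₀pos, hε₀⟩ := hKc.exists_cthickening_subset_open hΩo hKΩ
  -- choose ε
  have hIoc : Set.Ioc (0:ℝ) ε₀ ∈ 𝓝[>] (0:ℝ) := Ioc_mem_nhdsGT_of_mem ⟨le_refl 0, hε₀pos⟩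
  obtain ⟨ε, ⟨hA, hB⟩, hεIoc⟩ := ((hevA.and hevB).and hIoc).exists
  have hεpos : 0 < ε := hεIoc.1
  -- the bump
  set f : ContDiffBump (0 : EuclideanSpace ℝ (Fin n)) :=
    ⟨ε/2, ε, by positivity, by linarith⟩ with hfdef
  set ρ : EuclideanSpace ℝ (Fin n) → ℝ := f.normed volume with hρdef
  have hρ : ContDiff ℝ (⊤ : ℕ∞) ρ := f.contDiff_normed (n := ⊤)
  have hρs : HasCompactSupport ρ := f.hasCompactSupport_normed
  have hsupp : Function.support ρ ⊆ ball 0 ε := by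
    rw [hρdef, f.support_normed_eq]
  have hρnn : ∀ x, 0 ≤ ρ x := fun x => f.nonneg_normed x
  -- the field
  obtain ⟨Y, hYc, hYs, hYt, hYd⟩ :=
    hK ε (subset_trans (cthickening_mono hεIoc.2 K) hε₀) ρ hρ hρs hsupp
  -- bound on ρ
  set M : ℝ := 2 ^ n / (volume (closedBall (0 : EuclideanSpace ℝ (Fin n)) ε)).toReal with hMdef
  have hMbound : ∀ x, ρ x ≤ M := by
    intro x
    have h := f.normed_le_div_measure_closedBall_rOut volume 2 (by
      show ε ≤ 2 * (ε/2); linarith) x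
    rwa [finrank_euclideanSpace_fin] at h
  -- translated bump facts
  have hcont : ∀ p : EuclideanSpace ℝ (Fin n), Continuous (fun x => ρ (x - p)) := by
    intro p; exact hρ.continuous.comp (by fun_prop)
  have hcs : ∀ p : EuclideanSpace ℝ (Fin n), HasCompactSupport (fun x => ρ (x - p)) := by
    intro p
    have hss : Function.support (fun x => ρ (x - p)) ⊆ closedBall p ε := by
      intro x hx
      have := hsupp (Function.mem_support.2 hx)
      rw [mem_ball_zero_iff] at this
      rw [mem_closedBall_iff_norm]
      exact this.le
    exact IsCompact.of_isClosed_subset (isCompact_closedBall p ε) (isClosed_tsupport _)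
      (closure_minimal hss Metric.isClosed_closedBall)
  have hint : ∀ p : EuclideanSpace ℝ (Fin n), Integrable (fun x => ρ (x - p)) volume :=
    fun p => (hcont p).integrable_of_hasCompactSupport (hcs p)
  -- the key bound on set integrals of translated bumps
  have hkey : ∀ (p : EuclideanSpace ℝ (Fin n)) (T : Set (EuclideanSpace ℝ (Fin n))),
      ∫ x in T, ρ (x - p) ≤ M * (volume (T ∩ closedBall p ε)).toReal := by
    intro p T
    have hind : ∀ x, ρ (x - p) ≤ (closedBall p ε).indicator (fun _ => M) x := by
      intro x
      by_cases hx : x ∈ closedBall p ε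
      · rw [indicator_of_mem hx]; exact hMbound _
      · rw [indicator_of_notMem hx]
        have : ρ (x - p) = 0 := by
          by_contra hne
          have := hsupp (Function.mem_support.2 hne)
          rw [mem_ball_zero_iff] at this
          exact hx (mem_closedBall_iff_norm.2 this.le)
        rw [this]
    have hindint : Integrable ((closedBall p ε).indicator
        (fun _ => M) : EuclideanSpace ℝ (Fin n) → ℝ) volume := by
      rw [integrable_indicator_iff measurableSet_closedBall]
      exact integrableOn_const measure_closedBall_lt_top.ne
    calc ∫ x in T, ρ (x - p)
        ≤ ∫ x in T, (closedBall p ε).indicator (fun _ => M) x :=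
          setIntegral_mono (hint p).integrableOn hindint.integrableOn hind
      _ = ∫ x in T ∩ closedBall p ε, M := setIntegral_indicator measurableSet_closedBall
      _ = (volume (T ∩ closedBall p ε)).toReal • M := setIntegral_const M
      _ = M * (volume (T ∩ closedBall p ε)).toReal := by rw [smul_eq_mul, mul_comm]
  -- volume of closed balls around a, b equal that around 0
  have hvol : ∀ p : EuclideanSpace ℝ (Fin n),
      volume (closedBall p ε) = volume (closedBall (0 : EuclideanSpace ℝ (Fin n)) ε) :=
    fun p => Measure.addHaar_closedBall_center volume p ε
  have hV0pos : 0 < (volume (closedBall (0 : EuclideanSpace ℝ (Fin n)) ε)).toReal :=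
    ENNReal.toReal_pos (measure_closedBall_pos volume _ hεpos).ne' measure_closedBall_lt_top.ne
  -- the generic smallness estimate
  have hsmall : ∀ (p : EuclideanSpace ℝ (Fin n)) (T : Set (EuclideanSpace ℝ (Fin n))),
      (volume (T ∩ closedBall p ε)).toReal
        ≤ θ * (volume (closedBall p ε)).toReal →
      ∫ x in T, ρ (x - p) ≤ 1/4 := by
    intro p T hT
    have h3 := hkey p T
    have h4 : M * (volume (T ∩ closedBall p ε)).toReal
        ≤ M * (θ * (volume (closedBall p ε)).toReal) := by
      apply mul_le_mul_of_nonneg_left hT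
      rw [hMdef]; positivity
    have h5 : M * (θ * (volume (closedBall p ε)).toReal) = 1/4 := by
      rw [hvol p, hMdef, hθdef]
      field_simp
    linarith
  -- estimate at a
  have hEa : ∫ x in E, ρ (x - a) ≥ 3/4 := by
    have hsplit := integral_add_compl hEm (hint a)
    have htot : ∫ x, ρ (x - a) = 1 := by
      rw [integral_sub_right_eq_self ρ a]
      exact f.integral_normed
    have hcompl : ∫ x in Eᶜ, ρ (x - a) ≤ 1/4 := by
      apply hsmall a Eᶜ
      have hseteq : Eᶜ ∩ closedBall a ε = closedBall a ε \ E := by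
        rw [inter_comm, diff_eq]
      rw [hseteq]
      exact hA
    linarith
  -- estimate at b
  have hEb : ∫ x in E, ρ (x - b) ≤ 1/4 := by
    apply hsmall b E
    have hsub : E ∩ closedBall b ε ⊆ closedBall b ε \ (Ω \ E) := by
      rintro x ⟨hxE, hxB⟩
      exact ⟨hxB, fun hxd => hxd.2 hxE⟩
    calc (volume (E ∩ closedBall b ε)).toReal
        ≤ (volume (closedBall b ε \ (Ω \ E))).toReal := by
          apply ENNReal.toReal_mono
          · exact ((measure_mono diff_subset).trans_lt measure_closedBall_lt_top).ne
          · exact measure_mono hsub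
      _ ≤ θ * (volume (closedBall b ε)).toReal := hB
  -- total integral
  have hIeq : ∫ x in E, divergence Y x = (∫ x in E, ρ (x - a)) - ∫ x in E, ρ (x - b) := by
    rw [← integral_sub (hint a).integrableOn (hint b).integrableOn]
    exact setIntegral_congr_fun hEm (fun x _ => hYd x)
  set I : ℝ := ∫ x in E, divergence Y x with hIdef
  have hIpos : 0 < I := by
    rw [hIeq]; linarith
  refine ⟨fun x => I⁻¹ • Y x, hYc.const_smul I⁻¹, ?_, ?_, ?_⟩
  · exact IsCompact.of_isClosed_subset hYs (isClosed_tsupport _)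
      (closure_mono (Function.support_const_smul_subset I⁻¹ Y))
  · exact subset_trans (closure_mono (Function.support_const_smul_subset I⁻¹ Y)) hYt
  · have : ∀ x, divergence (fun y => I⁻¹ • Y y) x = I⁻¹ * divergence Y x :=
      divergence_const_smul (hYc.differentiable one_ne_zero) I⁻¹
    rw [setIntegral_congr_fun hEm (fun x _ => this x), integral_const_mul, ← hIdef,
      inv_mul_cancel₀ hIpos.ne']
end

section
/- Let μ be a locally finite, outer regular Borel measure on ℝⁿ, let k > 0, and suppose there exist constants c > 0 and δ > 0 and a set T ⊆ ℝⁿ such that μ(B_ρ(y)) ≥ c ρ^k for every y ∈ T and every ρ ∈ (0,δ). If S is a subset of the closure of T with μ(S) = 0, then the k-dimensional Hausdorff measure of S vanishes: H^k(S) = 0. -/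
open MeasureTheory Metric Set Filter
open scoped ENNReal Topology

/-- Covering lemma for the singular set: if `μ` is a locally finite outer
regular Borel measure on `ℝⁿ`, `k > 0`, and `μ(B_ρ(y)) ≥ c ρ^k` for all `y ∈ T`
and `ρ ∈ (0,δ)`, then every subset `S` of the closure of `T` with `μ(S) = 0`
has vanishing `k`-dimensional Hausdorff measure. -/
theorem stmt11 {n : ℕ} (μ : Measure (EuclideanSpace ℝ (Fin n)))
    [IsLocallyFiniteMeasure μ] [μ.OuterRegular]
    (k : ℝ) (hk : 0 < k) (c δ : ℝ) (hc : 0 < c) (hδ : 0 < δ)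
    (T : Set (EuclideanSpace ℝ (Fin n)))
    (hT : ∀ y ∈ T, ∀ ρ ∈ Set.Ioo (0 : ℝ) δ,
      ENNReal.ofReal (c * ρ ^ k) ≤ μ (Metric.ball y ρ))
    (S : Set (EuclideanSpace ℝ (Fin n))) (hS : S ⊆ closure T) (hμS : μ S = 0) :
    μH[k] S = 0 := by
  set C : ℝ≥0∞ := ENNReal.ofReal ((4 : ℝ) ^ k / c) with hC
  -- the radius bound at step m
  set ρ : ℕ → ℝ := fun m => min (δ / 2) (1 / (m + 1)) with hρ
  have ρpos : ∀ m, 0 < ρ m := fun m =>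
    lt_min (by linarith) (by positivity)
  -- For each m, get a Besicovitch covering of `S` by closed balls of radius < ρ m
  -- with total measure at most `2⁻¹ ^ m`.
  have key : ∀ m : ℕ, ∃ (t : Set (EuclideanSpace ℝ (Fin n))) (r : EuclideanSpace ℝ (Fin n) → ℝ), t.Countable ∧ t ⊆ S ∧
      (∀ x ∈ t, r x ∈ Set.Ioo 0 (ρ m)) ∧
      (S ⊆ ⋃ x ∈ t, closedBall x (r x)) ∧
      (∑' x : t, μ (closedBall x (r x))) ≤ (2 : ℝ≥0∞)⁻¹ ^ m := by
    intro m
    have hε : ((2 : ℝ≥0∞)⁻¹ ^ m) ≠ 0 := by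
      simp [pow_ne_zero]
    obtain ⟨t, r, tc, ts, hr, hcov, hsum⟩ :=
      Besicovitch.exists_closedBall_covering_tsum_measure_le μ hε
        (fun _ => Set.Ioo 0 (ρ m)) S (fun x _ d hd =>
          ⟨min (ρ m / 2) (d / 2), ⟨lt_min (by linarith [ρpos m]) (by linarith),
            lt_of_le_of_lt (min_le_left _ _) (by linarith [ρpos m])⟩,
            lt_min (by linarith [ρpos m]) (by linarith),
            lt_of_le_of_lt (min_le_right _ _) (by linarith)⟩)
    exact ⟨t, r, tc, ts, hr, hcov, by simpa [hμS] using hsum⟩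
  choose t r tc ts hr hcov hsum using key
  haveI : ∀ m, Countable (t m) := fun m => (tc m).to_subtype
  -- bound the Hausdorff measure via these coverings
  have diam_le : ∀ m, ∀ i : t m,
      EMetric.diam (closedBall (i : EuclideanSpace ℝ (Fin n)) (r m i)) ≤ ENNReal.ofReal (2 * ρ m) := by
    intro m i
    have h1 : (0 : ℝ) ≤ r m i := (hr m i i.2).1.le
    calc EMetric.diam (closedBall (i : EuclideanSpace ℝ (Fin n)) (r m i))
        ≤ 2 * ENNReal.ofReal (r m i) := by
          rw [← Metric.emetric_closedBall h1]; exact EMetric.diam_closedBall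
      _ ≤ ENNReal.ofReal (2 * ρ m) := by
          rw [ENNReal.ofReal_mul (by norm_num), ENNReal.ofReal_ofNat]
          exact mul_le_mul_right (ENNReal.ofReal_le_ofReal (hr m i i.2).2.le) _
  have hmain : μH[k] S ≤ liminf (fun m => ∑' i : t m,
      EMetric.diam (closedBall (i : EuclideanSpace ℝ (Fin n)) (r m i)) ^ k) atTop := by
    refine Measure.hausdorffMeasure_le_liminf_tsum k S (fun m => ENNReal.ofReal (2 * ρ m)) ?_
      (fun m (i : t m) => closedBall (i : EuclideanSpace ℝ (Fin n)) (r m i)) (Eventually.of_forall diam_le)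
      (Eventually.of_forall fun m => ?_)
    · have h0 : Tendsto (fun m : ℕ => ρ m) atTop (𝓝 0) := by
        have := (tendsto_const_nhds (x := δ / 2) (f := atTop (α := ℕ))).min
          tendsto_one_div_add_atTop_nhds_zero_nat
        simpa [hρ, one_div, min_eq_right (by linarith : (0:ℝ) ≤ δ / 2)] using this
      rw [show (0:ℝ≥0∞) = ENNReal.ofReal (2 * 0) by simp]
      exact (ENNReal.continuous_ofReal.tendsto _).comp (h0.const_mul 2)
    · intro x hx
      obtain ⟨z, hz, hy⟩ := Set.mem_iUnion₂.1 (hcov m hx)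
      exact Set.mem_iUnion.2 ⟨⟨z, hz⟩, hy⟩
  -- each term of the liminf is small
  have term_le : ∀ m, (∑' i : t m,
      EMetric.diam (closedBall (i : EuclideanSpace ℝ (Fin n)) (r m i)) ^ k) ≤ C * (2 : ℝ≥0∞)⁻¹ ^ m := by
    intro m
    have step : ∀ i : t m,
        EMetric.diam (closedBall (i : EuclideanSpace ℝ (Fin n)) (r m i)) ^ k ≤ C * μ (closedBall (i : EuclideanSpace ℝ (Fin n)) (r m i)) := by
      intro i
      have hri : r m i ∈ Set.Ioo 0 (ρ m) := hr m i i.2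
      -- find y ∈ T close to i
      have hiS : (i : EuclideanSpace ℝ (Fin n)) ∈ closure T := hS (ts m i.2)
      obtain ⟨y, hyT, hyd⟩ := Metric.mem_closure_iff.1 hiS (r m i / 2) (by linarith [hri.1])
      have hball : Metric.ball y (r m i / 2) ⊆ closedBall (i : EuclideanSpace ℝ (Fin n)) (r m i) := by
        intro z hz
        simp only [Metric.mem_ball, Metric.mem_closedBall] at hz ⊢
        have := dist_triangle z y (i : EuclideanSpace ℝ (Fin n))
        rw [dist_comm (↑i) y] at hyd
        linarith
      have hρδ : r m i / 2 ∈ Set.Ioo (0 : ℝ) δ := by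
        constructor
        · linarith [hri.1]
        · have : r m i < δ / 2 := lt_of_lt_of_le hri.2 (min_le_left _ _)
          linarith
      have hmeas : ENNReal.ofReal (c * (r m i / 2) ^ k) ≤ μ (closedBall (i : EuclideanSpace ℝ (Fin n)) (r m i)) :=
        le_trans (hT y hyT _ hρδ) (measure_mono hball)
      have hdiam : EMetric.diam (closedBall (i : EuclideanSpace ℝ (Fin n)) (r m i)) ^ k
          ≤ ENNReal.ofReal ((2 * r m i) ^ k) := by
        calc EMetric.diam (closedBall (i : EuclideanSpace ℝ (Fin n)) (r m i)) ^ k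
            ≤ (ENNReal.ofReal (2 * r m i)) ^ k := by
              refine ENNReal.rpow_le_rpow ?_ hk.le
              have h1 : (0 : ℝ) ≤ r m i := hri.1.le
              calc EMetric.diam (closedBall (i : EuclideanSpace ℝ (Fin n)) (r m i))
                  ≤ 2 * ENNReal.ofReal (r m i) := by
                    rw [← Metric.emetric_closedBall h1]; exact EMetric.diam_closedBall
                _ = ENNReal.ofReal (2 * r m i) := by
                    rw [ENNReal.ofReal_mul (by norm_num), ENNReal.ofReal_ofNat]
          _ = ENNReal.ofReal ((2 * r m i) ^ k) :=
              ENNReal.ofReal_rpow_of_nonneg (by linarith [hri.1]) hk.le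
      have hfactor : (2 * r m i) ^ k = (4 : ℝ) ^ k / c * (c * (r m i / 2) ^ k) := by
        have h2 : (2 : ℝ) * r m i = 4 * (r m i / 2) := by ring
        rw [h2, Real.mul_rpow (by norm_num) (by linarith [hri.1])]
        field_simp
      calc EMetric.diam (closedBall (i : EuclideanSpace ℝ (Fin n)) (r m i)) ^ k
          ≤ ENNReal.ofReal ((2 * r m i) ^ k) := hdiam
        _ = C * ENNReal.ofReal (c * (r m i / 2) ^ k) := by
            rw [hfactor, ENNReal.ofReal_mul (by positivity)]
        _ ≤ C * μ (closedBall (i : EuclideanSpace ℝ (Fin n)) (r m i)) := mul_le_mul_right hmeas _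
    calc (∑' i : t m, EMetric.diam (closedBall (i : EuclideanSpace ℝ (Fin n)) (r m i)) ^ k)
        ≤ ∑' i : t m, C * μ (closedBall (i : EuclideanSpace ℝ (Fin n)) (r m i)) := ENNReal.tsum_le_tsum step
      _ = C * ∑' i : t m, μ (closedBall (i : EuclideanSpace ℝ (Fin n)) (r m i)) := ENNReal.tsum_mul_left
      _ ≤ C * (2 : ℝ≥0∞)⁻¹ ^ m := mul_le_mul_right (hsum m) _
  have hlim : Tendsto (fun m : ℕ => C * (2 : ℝ≥0∞)⁻¹ ^ m) atTop (𝓝 0) := by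
    have h2 : Tendsto (fun m : ℕ => (2 : ℝ≥0∞)⁻¹ ^ m) atTop (𝓝 0) :=
      ENNReal.tendsto_pow_atTop_nhds_zero_of_lt_one (by
        rw [ENNReal.inv_lt_one]; exact ENNReal.one_lt_two)
    simpa using ENNReal.Tendsto.const_mul h2 (Or.inr ENNReal.ofReal_ne_top)
  have : liminf (fun m => ∑' i : t m,
      EMetric.diam (closedBall (i : EuclideanSpace ℝ (Fin n)) (r m i)) ^ k) atTop = 0 := by
    refine le_antisymm ?_ (zero_le)
    calc liminf (fun m => ∑' i : t m, EMetric.diam (closedBall (i : EuclideanSpace ℝ (Fin n)) (r m i)) ^ k) atTop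
        ≤ liminf (fun m : ℕ => C * (2 : ℝ≥0∞)⁻¹ ^ m) atTop :=
          liminf_le_liminf (Eventually.of_forall term_le)
      _ = 0 := hlim.liminf_eq
  exact le_antisymm (this ▸ hmain) (zero_le)
end
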